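/- Let M be a 3×n real matrix (n ≥ 3) whose first three columns are linearly independent, let U be an n×1 vector with its first three entries strictly positive and all other entries nonnegative, and set P = MU. Then there exists ε > 0 such that for any 3×n matrix M' with every entry within ε of the corresponding entry of M, there exists an n×1 vector U' with M'U' = P, whose first three entries are strictly positive and all other entries equal the corresponding entries of U (in particular nonnegative). -/

import Mathlib

attribute [local instance] Matrix.normedAddCommGroup

section aux
variable (n : ℕ)

private lemma eps_of_nhds {M : Matrix (Fin 3) (Fin n) ℝ} {t : Set (Matrix (Fin 3) (Fin n) ℝ)}
    (ht : t ∈ nhds M) : ∃ ε > 0, ∀ N, (∀ i j, |N i j - M i j| < ε) → N ∈ t := by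
  replace ht := Metric.mem_nhds_iff.mp ht
  obtain ⟨ε, hε, hball⟩ := ht
  refine ⟨ε, hε, fun N h => hball ?_⟩
  rw [Metric.mem_ball, dist_eq_norm, Matrix.norm_lt_iff hε]
  intro i j
  simpa [Real.norm_eq_abs] using h i j

end aux

theorem stmt_6 (n : ℕ) (hn : 3 ≤ n) (M : Matrix (Fin 3) (Fin n) ℝ) (U : Fin n → ℝ)
    (hind : LinearIndependent ℝ (fun j : Fin 3 => fun i : Fin 3 => M i (Fin.castLE hn j)))
    (hUpos : ∀ i : Fin n, (i : ℕ) < 3 → 0 < U i)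
    (hUnn : ∀ i : Fin n, 3 ≤ (i : ℕ) → 0 ≤ U i) :
    ∃ ε > 0, ∀ M' : Matrix (Fin 3) (Fin n) ℝ,
      (∀ i j, |M' i j - M i j| < ε) →
      ∃ U' : Fin n → ℝ, M'.mulVec U' = M.mulVec U ∧
        (∀ i : Fin n, (i : ℕ) < 3 → 0 < U' i) ∧
        (∀ i : Fin n, 3 ≤ (i : ℕ) → U' i = U i) := by
  classical
  set A : Matrix (Fin 3) (Fin n) ℝ → Matrix (Fin 3) (Fin 3) ℝ :=
    fun N => N.submatrix id (Fin.castLE hn) with hA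
  set Ut : Fin n → ℝ := fun j => if (j : ℕ) < 3 then 0 else U j with hUt
  -- determinant nonzero
  have hdet : (A M).det ≠ 0 := by
    have h1 : IsUnit (A M).transpose := by
      rw [← Matrix.linearIndependent_rows_iff_isUnit]
      exact hind
    have h2 : IsUnit (A M) := (Matrix.isUnit_transpose (A M)).mp h1
    have := (Matrix.isUnit_iff_isUnit_det _).mp h2
    exact this.ne_zero
  -- sum lemma
  have hsum : ∀ (f : Fin n → ℝ), (∀ j : Fin n, 3 ≤ (j : ℕ) → f j = 0) →
      ∑ j, f j = ∑ k : Fin 3, f (Fin.castLE hn k) := by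
    intro f hf
    have hmap := Finset.sum_map (Finset.univ : Finset (Fin 3))
      ⟨Fin.castLE hn, Fin.castLE_injective hn⟩ f
    simp only [Function.Embedding.coeFn_mk] at hmap
    rw [← hmap]
    symm
    apply Finset.sum_subset (Finset.subset_univ _)
    intro j _ hj
    apply hf
    by_contra hlt
    push_neg at hlt
    exact hj (Finset.mem_map.mpr ⟨⟨(j : ℕ), hlt⟩, Finset.mem_univ _, Fin.ext (by simp)⟩)
  -- decomposition lemma
  have hdec : ∀ (N : Matrix (Fin 3) (Fin n) ℝ) (x : Fin 3 → ℝ),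
      N.mulVec (fun j => if h : (j : ℕ) < 3 then x ⟨(j : ℕ), h⟩ else U j)
        = (A N).mulVec x + N.mulVec Ut := by
    intro N x
    funext i
    have h1 : ∀ j : Fin n, N i j * (if h : (j : ℕ) < 3 then x ⟨(j : ℕ), h⟩ else U j)
        = (if h : (j : ℕ) < 3 then N i j * x ⟨(j : ℕ), h⟩ else 0) + N i j * Ut j := by
      intro j
      by_cases h : (j : ℕ) < 3 <;> simp [hUt, h]
    simp only [Matrix.mulVec, dotProduct, Pi.add_apply]
    rw [Finset.sum_congr rfl (fun j _ => h1 j), Finset.sum_add_distrib]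
    congr 1
    rw [hsum _ (fun j hj => by simp [Nat.not_lt.mpr hj])]
    apply Finset.sum_congr rfl
    intro k _
    have hk : ((Fin.castLE hn k : Fin n) : ℕ) < 3 := by simpa using k.isLt
    rw [dif_pos hk]
    simp [hA]
  -- key decomposition of M.mulVec U
  have hkey : M.mulVec U = (A M).mulVec (fun k => U (Fin.castLE hn k)) + M.mulVec Ut := by
    have hU : U = fun j : Fin n => if h : (j : ℕ) < 3 then
        (fun k : Fin 3 => U (Fin.castLE hn k)) ⟨(j : ℕ), h⟩ else U j := by
      funext j
      by_cases h : (j : ℕ) < 3 <;> simp [h]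
    conv_lhs => rw [hU]
    exact hdec M (fun k => U (Fin.castLE hn k))
  -- define F
  set F : Matrix (Fin 3) (Fin n) ℝ → Fin 3 → ℝ :=
    fun N => ((A N).det)⁻¹ • (A N).adjugate.mulVec (M.mulVec U - N.mulVec Ut) with hF
  have hFM : F M = fun k => U (Fin.castLE hn k) := by
    simp only [hF]
    have : M.mulVec U - M.mulVec Ut = (A M).mulVec (fun k => U (Fin.castLE hn k)) := by
      rw [hkey]; abel
    rw [this, Matrix.mulVec_mulVec, Matrix.adjugate_mul, Matrix.smul_mulVec,
      Matrix.one_mulVec, smul_smul, inv_mul_cancel₀ hdet, one_smul]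
  -- continuity
  have hsubc : Continuous A := continuous_id.matrix_submatrix _ _
  have hdc : Continuous (fun N => (A N).det) := hsubc.matrix_det
  have hnum : Continuous (fun N : Matrix (Fin 3) (Fin n) ℝ =>
      (A N).adjugate.mulVec (M.mulVec U - N.mulVec Ut)) :=
    (hsubc.matrix_adjugate).matrix_mulVec
      (continuous_const.sub (continuous_id.matrix_mulVec continuous_const))
  have hFc : ContinuousAt F M := (hdc.continuousAt.inv₀ hdet).smul hnum.continuousAt
  -- eventual set
  have hev : ∀ᶠ N in nhds M, (A N).det ≠ 0 ∧ ∀ k, 0 < F N k := by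
    refine Filter.Eventually.and (hdc.continuousAt.eventually_ne hdet)
      (Filter.eventually_all.2 fun k => ?_)
    have hck : ContinuousAt (fun N => F N k) M :=
      (continuous_apply k).continuousAt.comp hFc
    have hpos : 0 < F M k := by
      rw [hFM]
      exact hUpos _ (by simpa using k.isLt)
    exact hck.eventually (eventually_gt_nhds hpos)
  obtain ⟨ε, hε, hball⟩ := eps_of_nhds n hev
  refine ⟨ε, hε, fun M' hM' => ?_⟩
  obtain ⟨hdet', hpos'⟩ := hball M' hM'
  refine ⟨fun j => if h : (j : ℕ) < 3 then F M' ⟨(j : ℕ), h⟩ else U j, ?_, ?_, ?_⟩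
  · rw [hdec M' (F M')]
    have : (A M').mulVec (F M') = M.mulVec U - M'.mulVec Ut := by
      simp only [hF]
      rw [Matrix.mulVec_smul]
      rw [Matrix.mulVec_mulVec, Matrix.mul_adjugate, Matrix.smul_mulVec,
        Matrix.one_mulVec, smul_smul, inv_mul_cancel₀ hdet', one_smul]
    rw [this]; abel
  · intro i hi
    simp only [dif_pos hi]
    exact hpos' _
  · intro i hi
    simp only [dif_neg (Nat.not_lt.mpr hi)]
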